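/- arXiv:2204.03469 — 2 statements merged into one kernel-verified Lean document; each statement's English description precedes it below -/
import Mathlib

section
/- Let S ⊆ {-1,+1}^N with |S| ≥ exp(N·δ), let μ be uniform on S, and suppose ε ∈ (0,1) satisfies ψ₂(ε) ≤ δ/2 (with ψ₂ as in the binary entropy notation). Let n be a positive integer with n ≤ exp(N·δ/4)/2. Then under μ^⊗n, the probability that (σ⁽¹⁾,…,σ⁽ⁿ⁾) are pairwise (1-ε)-separated, i.e. ⟨σ⁽ⁱ⁾,σ⁽ʲ⁾⟩/N ≤ 1-ε for all i ≠ j, is at least 3/4. -/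
/-- The ±1 value attached to a Boolean coordinate. -/
def sgn (b : Bool) : ℝ := if b then 1 else -1

/-- Scalar product of two points of the hypercube `{-1,+1}^N` (encoded by Booleans). -/
noncomputable def ip {N : ℕ} (σ τ : Fin N → Bool) : ℝ := ∑ i, sgn (σ i) * sgn (τ i)

/-- Binary relative entropy `k₂(t) = H((1+t)/2 | 1/2)`. -/
noncomputable def k₂ (t : ℝ) : ℝ :=
  (1 + t) / 2 * Real.log (1 + t) + (1 - t) / 2 * Real.log (1 - t)

/-- `ψ₂(ε) = log 2 - k₂(1-ε)`. -/
noncomputable def ψ₂ (ε : ℝ) : ℝ := Real.log 2 - k₂ (1 - ε)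

lemma exp_iden (s : ℝ) (hs0 : 0 < s) (hs1 : s < 1) :
    Real.exp ((Real.log (1+s) - Real.log (1-s))/2)
      + Real.exp (-((Real.log (1+s) - Real.log (1-s))/2))
      = 2 * Real.exp (((Real.log (1+s) - Real.log (1-s))/2) * s - k₂ s) := by
  have h1 : (0:ℝ) < 1 + s := by linarith
  have h2 : (0:ℝ) < 1 - s := by linarith
  set a := Real.exp (Real.log (1+s)/2) with ha
  set b := Real.exp (Real.log (1-s)/2) with hb
  have ha0 : 0 < a := Real.exp_pos _
  have hb0 : 0 < b := Real.exp_pos _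
  have haa : a * a = 1 + s := by
    rw [ha, ← Real.exp_add]
    rw [show Real.log (1+s)/2 + Real.log (1+s)/2 = Real.log (1+s) by ring]
    exact Real.exp_log h1
  have hbb : b * b = 1 - s := by
    rw [hb, ← Real.exp_add]
    rw [show Real.log (1-s)/2 + Real.log (1-s)/2 = Real.log (1-s) by ring]
    exact Real.exp_log h2
  have e1 : Real.exp ((Real.log (1+s) - Real.log (1-s))/2) = a / b := by
    rw [ha, hb, ← Real.exp_sub]; ring_nf
  have e2 : Real.exp (-((Real.log (1+s) - Real.log (1-s))/2)) = b / a := by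
    rw [ha, hb, ← Real.exp_sub]; ring_nf
  have e3 : Real.exp (((Real.log (1+s) - Real.log (1-s))/2) * s - k₂ s)
      = 1 / (a * b) := by
    rw [show ((Real.log (1+s) - Real.log (1-s))/2) * s - k₂ s
        = -(Real.log (1+s)/2 + Real.log (1-s)/2) by unfold k₂; ring]
    rw [ha, hb, Real.exp_neg, ← Real.exp_add, one_div]
  rw [e1, e2, e3]
  have hsum : a*a + b*b = 2 := by linarith
  field_simp
  linear_combination hsum

lemma badcount (N : ℕ) (ε : ℝ) (hε0 : 0 < ε) (hε1 : ε < 1) (σ : Fin N → Bool) :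
    ((Finset.univ.filter (fun τ : Fin N → Bool => ¬ (ip σ τ / (N:ℝ) ≤ 1 - ε))).card : ℝ)
      ≤ Real.exp ((N:ℝ) * ψ₂ ε) := by
  set s := 1 - ε with hsdef
  have hs0 : 0 < s := by simp [hsdef]; linarith
  have hs1 : s < 1 := by simp [hsdef]; linarith
  set L := (Real.log (1+s) - Real.log (1-s))/2 with hL
  have hL0 : 0 ≤ L := by
    have : Real.log (1-s) ≤ Real.log (1+s) :=
      Real.log_le_log (by linarith) (by linarith)
    simp [hL]; linarith
  set F := Finset.univ.filter (fun τ : Fin N → Bool => ¬ (ip σ τ / (N:ℝ) ≤ s)) with hF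
  -- step 1 & 2
  have step1 : (F.card : ℝ) ≤ ∑ τ : Fin N → Bool, Real.exp (L * ip σ τ) * Real.exp (-(L * s * N)) := by
    calc (F.card : ℝ) = ∑ τ ∈ F, (1:ℝ) := by simp
    _ ≤ ∑ τ ∈ F, Real.exp (L * ip σ τ) * Real.exp (-(L * s * N)) := by
        apply Finset.sum_le_sum
        intro τ hτ
        rw [← Real.exp_add]
        apply Real.one_le_exp
        have hmem := (Finset.mem_filter.mp hτ).2
        have hip : s * N ≤ ip σ τ := by
          rcases Nat.eq_zero_or_pos N with h | h
          · exfalso; apply hmem; simp [h]; positivity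
          · have hN : (0:ℝ) < N := by exact_mod_cast h
            have h' := le_of_not_ge hmem
            exact (le_div_iff₀ hN).mp h'
        nlinarith [hip, hL0]
    _ ≤ ∑ τ : Fin N → Bool, Real.exp (L * ip σ τ) * Real.exp (-(L * s * N)) := by
        apply Finset.sum_le_sum_of_subset_of_nonneg (Finset.filter_subset _ _)
        intro τ _ _; positivity
  -- step 4: factorization
  have step4 : ∑ τ : Fin N → Bool, Real.exp (L * ip σ τ)
      = (Real.exp L + Real.exp (-L)) ^ N := by
    have h1 : ∀ τ : Fin N → Bool, Real.exp (L * ip σ τ)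
        = ∏ i, Real.exp (L * (sgn (σ i) * sgn (τ i))) := by
      intro τ
      rw [← Real.exp_sum]
      congr 1
      rw [ip, Finset.mul_sum]
    simp_rw [h1]
    rw [← Fintype.piFinset_univ]
    rw [← Finset.prod_univ_sum (fun _ : Fin N => (Finset.univ : Finset Bool))
      (fun i b => Real.exp (L * (sgn (σ i) * sgn b)))]
    have h2 : ∀ i : Fin N, (∑ b : Bool, Real.exp (L * (sgn (σ i) * sgn b)))
        = Real.exp L + Real.exp (-L) := by
      intro i
      cases hσ : σ i <;> simp [sgn, Fintype.sum_bool] <;> ring_nf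
    simp_rw [h2]
    simp
  calc (F.card : ℝ)
      ≤ ∑ τ : Fin N → Bool, Real.exp (L * ip σ τ) * Real.exp (-(L * s * N)) := step1
    _ = (∑ τ : Fin N → Bool, Real.exp (L * ip σ τ)) * Real.exp (-(L * s * N)) := by
        rw [← Finset.sum_mul]
    _ = (Real.exp L + Real.exp (-L)) ^ N * Real.exp (-(L * s * N)) := by rw [step4]
    _ = Real.exp ((N:ℝ) * ψ₂ ε) := by
        have hid := exp_iden s hs0 hs1
        rw [← hL] at hid
        rw [hid, mul_pow, ← Real.exp_log (by norm_num : (0:ℝ) < 2)]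
        rw [← Real.exp_nat_mul, ← Real.exp_nat_mul, ← Real.exp_add, ← Real.exp_add]
        congr 1
        unfold ψ₂
        rw [← hsdef]
        ring

lemma pair_count {N n : ℕ} (S : Finset (Fin N → Bool)) (y₀ : Fin N → Bool) (hy₀ : y₀ ∈ S)
    (s B : ℝ)
    (hB : ∀ σ : Fin N → Bool,
      ((Finset.univ.filter (fun τ : Fin N → Bool => ¬ (ip σ τ / (N:ℝ) ≤ s))).card : ℝ) ≤ B)
    (i j : Fin n) (hij : i ≠ j) :
    (((Fintype.piFinset (fun _ : Fin n => S)).filter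
        (fun x => ¬ (ip (x i) (x j) / (N:ℝ) ≤ s))).card : ℝ)
      ≤ (S.card : ℝ) ^ (n-1) * B := by
  classical
  set t : Fin n → Finset (Fin N → Bool) := fun k => if k = j then {y₀} else S with ht
  set T := ((Fintype.piFinset t) ×ˢ (Finset.univ : Finset (Fin N → Bool))).filter
      (fun p => ¬ (ip (p.1 i) p.2 / (N:ℝ) ≤ s)) with hT
  have hle : ((Fintype.piFinset (fun _ : Fin n => S)).filter
      (fun x => ¬ (ip (x i) (x j) / (N:ℝ) ≤ s))).card ≤ T.card := by
    apply Finset.card_le_card_of_injOn (fun x => (Function.update x j y₀, x j))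
    · intro x hx
      simp only [Finset.mem_coe, Finset.mem_filter, Fintype.mem_piFinset] at hx
      obtain ⟨hx1, hx2⟩ := hx
      simp only [hT, Finset.mem_coe, Finset.mem_filter]
      refine ⟨Finset.mem_product.mpr ⟨?_, Finset.mem_univ _⟩, ?_⟩
      · rw [Fintype.mem_piFinset]
        intro k
        by_cases hk : k = j
        · subst hk; simp [ht, Function.update_self]
        · simp only [ht, if_neg hk]
          rw [Function.update_of_ne hk]
          exact hx1 k
      · show ¬ (ip (Function.update x j y₀ i) (x j) / (N:ℝ) ≤ s)
        rwa [Function.update_of_ne hij]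
    · intro x hx x' hx' hEq
      simp only [Prod.mk.injEq] at hEq
      obtain ⟨h1, h2'⟩ := hEq
      funext k
      by_cases hk : k = j
      · subst hk; exact h2'
      · have := congrFun h1 k
        rwa [Function.update_of_ne hk, Function.update_of_ne hk] at this
  have hTsum : T.card = ∑ z ∈ Fintype.piFinset t,
      (Finset.univ.filter (fun τ : Fin N → Bool => ¬ (ip (z i) τ / (N:ℝ) ≤ s))).card := by
    rw [hT, Finset.card_filter, Finset.sum_product]
    exact Finset.sum_congr rfl fun z _ => (Finset.card_filter _ _).symm
  have hcard : (T.card : ℝ) ≤ (S.card : ℝ) ^ (n-1) * B := by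
    rw [hTsum]
    push_cast
    have hpi : ((Fintype.piFinset t).card : ℝ) = (S.card : ℝ) ^ (n-1) := by
      rw [Fintype.card_piFinset]
      rw [← Finset.prod_erase_mul Finset.univ _ (Finset.mem_univ j)]
      have h1 : (t j).card = 1 := by simp [ht]
      have h2 : ∀ k ∈ Finset.univ.erase j, (t k).card = S.card := by
        intro k hk
        simp [ht, (Finset.mem_erase.mp hk).1]
      rw [h1, Finset.prod_congr rfl h2, Finset.prod_const, mul_one]
      rw [Finset.card_erase_of_mem (Finset.mem_univ j), Finset.card_univ, Fintype.card_fin]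
      push_cast
      rfl
    calc (∑ z ∈ Fintype.piFinset t,
          ((Finset.univ.filter (fun τ : Fin N → Bool => ¬ (ip (z i) τ / (N:ℝ) ≤ s))).card : ℝ))
        ≤ ∑ _z ∈ Fintype.piFinset t, B := Finset.sum_le_sum (fun z _ => hB (z i))
      _ = ((Fintype.piFinset t).card : ℝ) * B := by rw [Finset.sum_const, nsmul_eq_mul]
      _ = (S.card : ℝ) ^ (n-1) * B := by rw [hpi]
  exact le_trans (by exact_mod_cast hle) hcard

/-- Under `μ^⊗n` (uniform on `Sⁿ`), an `n`-tuple is pairwise `(1-ε)`-separated with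
probability at least `3/4`, provided `|S| ≥ exp(Nδ)`, `ψ₂(ε) ≤ δ/2` and
`1 ≤ n ≤ exp(Nδ/4)/2`. -/
theorem tuples_pairwise_separated (N : ℕ) (δ : ℝ) (hδ : 0 < δ)
    (S : Finset (Fin N → Bool)) (hS : Real.exp (N * δ) ≤ (S.card : ℝ))
    (ε : ℝ) (hε0 : 0 < ε) (hε1 : ε < 1) (hεδ : ψ₂ ε ≤ δ / 2)
    (n : ℕ) (hn1 : 1 ≤ n) (hn2 : (n : ℝ) ≤ Real.exp (N * δ / 4) / 2) :
    (3 : ℝ) / 4 ≤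
      ((Finset.univ.filter (fun x : Fin n → (Fin N → Bool) =>
          (∀ i, x i ∈ S) ∧
          ∀ i j, i ≠ j → ip (x i) (x j) / (N : ℝ) ≤ 1 - ε)).card : ℝ)
        / (S.card : ℝ) ^ n := by
  classical
  have hS1 : (1:ℝ) ≤ (S.card : ℝ) :=
    le_trans (Real.one_le_exp (by positivity)) hS
  have hScard : 0 < S.card := by exact_mod_cast lt_of_lt_of_le zero_lt_one hS1
  obtain ⟨y₀, hy₀⟩ := Finset.card_pos.mp hScard
  set P := Fintype.piFinset (fun _ : Fin n => S) with hP
  set sep : (Fin n → Fin N → Bool) → Prop :=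
    fun x => ∀ i j, i ≠ j → ip (x i) (x j) / (N : ℝ) ≤ 1 - ε with hsep
  have hG : (Finset.univ.filter (fun x : Fin n → (Fin N → Bool) =>
          (∀ i, x i ∈ S) ∧ ∀ i j, i ≠ j → ip (x i) (x j) / (N : ℝ) ≤ 1 - ε))
      = P.filter (fun x => sep x) := by
    ext x
    simp [hP, Fintype.mem_piFinset, hsep]
  set G := P.filter (fun x => sep x) with hGdef
  set Bad := P.filter (fun x => ¬ sep x) with hBad
  have hGB : G.card + Bad.card = P.card :=
    Finset.card_filter_add_card_filter_not (fun x => sep x)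
  have hPcard : (P.card : ℝ) = (S.card : ℝ) ^ n := by
    rw [hP, Fintype.card_piFinset]
    push_cast
    simp
  -- bound on the bad count
  set B : ℝ := Real.exp ((N:ℝ) * (δ/2)) with hBdef
  have hBbound : ∀ σ : Fin N → Bool,
      ((Finset.univ.filter (fun τ : Fin N → Bool => ¬ (ip σ τ / (N:ℝ) ≤ 1 - ε))).card : ℝ)
        ≤ B := by
    intro σ
    refine le_trans (badcount N ε hε0 hε1 σ) (Real.exp_le_exp.mpr ?_)
    exact mul_le_mul_of_nonneg_left hεδ (Nat.cast_nonneg N)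
  have hBadsub : Bad ⊆ (Finset.univ.offDiag).biUnion
      (fun p : Fin n × Fin n => P.filter (fun x => ¬ (ip (x p.1) (x p.2) / (N:ℝ) ≤ 1 - ε))) := by
    intro x hx
    rw [hBad, Finset.mem_filter] at hx
    obtain ⟨hx1, hx2⟩ := hx
    obtain ⟨i, j, hij, hlt⟩ : ∃ i j : Fin n, i ≠ j ∧ ¬ (ip (x i) (x j) / (N:ℝ) ≤ 1 - ε) := by
      by_contra h
      push_neg at h
      exact hx2 (fun i j hij => h i j hij)
    rw [Finset.mem_biUnion]
    exact ⟨(i, j), Finset.mem_offDiag.mpr ⟨Finset.mem_univ _, Finset.mem_univ _, hij⟩,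
      Finset.mem_filter.mpr ⟨hx1, hlt⟩⟩
  have hBadcard : (Bad.card : ℝ) ≤ (n:ℝ)^2 * ((S.card : ℝ) ^ (n-1) * B) := by
    have h1 : Bad.card ≤ ∑ p ∈ Finset.univ.offDiag,
        (P.filter (fun x => ¬ (ip (x p.1) (x p.2) / (N:ℝ) ≤ 1 - ε))).card :=
      le_trans (Finset.card_le_card hBadsub) (Finset.card_biUnion_le)
    have h2 : (∑ p ∈ Finset.univ.offDiag,
        ((P.filter (fun x => ¬ (ip (x p.1) (x p.2) / (N:ℝ) ≤ 1 - ε))).card : ℝ))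
        ≤ ∑ _p ∈ (Finset.univ : Finset (Fin n)).offDiag, ((S.card : ℝ) ^ (n-1) * B) := by
      refine Finset.sum_le_sum (fun p hp => ?_)
      exact pair_count S y₀ hy₀ (1-ε) B hBbound p.1 p.2 (Finset.mem_offDiag.mp hp).2.2
    have h3 : ((Finset.univ : Finset (Fin n)).offDiag.card : ℝ) ≤ (n:ℝ)^2 := by
      rw [Finset.offDiag_card, Finset.card_univ, Fintype.card_fin]
      have : n * n - n ≤ n * n := Nat.sub_le _ _
      calc ((n * n - n : ℕ) : ℝ) ≤ ((n*n : ℕ) : ℝ) := by exact_mod_cast this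
        _ = (n:ℝ)^2 := by push_cast; ring
    calc (Bad.card : ℝ) ≤ ∑ p ∈ Finset.univ.offDiag,
          ((P.filter (fun x => ¬ (ip (x p.1) (x p.2) / (N:ℝ) ≤ 1 - ε))).card : ℝ) := by
          exact_mod_cast h1
      _ ≤ ∑ _p ∈ (Finset.univ : Finset (Fin n)).offDiag, ((S.card : ℝ) ^ (n-1) * B) := h2
      _ = ((Finset.univ : Finset (Fin n)).offDiag.card : ℝ) * ((S.card : ℝ) ^ (n-1) * B) := by
          rw [Finset.sum_const, nsmul_eq_mul]
      _ ≤ (n:ℝ)^2 * ((S.card : ℝ) ^ (n-1) * B) := by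
          have hnn : (0:ℝ) ≤ (S.card : ℝ) ^ (n-1) * B := by positivity
          exact mul_le_mul_of_nonneg_right h3 hnn
  -- numeric endgame
  have hn2' : (n:ℝ)^2 * B ≤ (S.card : ℝ) / 4 := by
    have hexp : Real.exp (N * δ / 4) ^ 2 = Real.exp ((N:ℝ) * (δ/2)) := by
      rw [← Real.exp_nat_mul]
      congr 1
      push_cast
      ring
    have hn0 : (0:ℝ) ≤ n := Nat.cast_nonneg n
    have hsq : (n:ℝ)^2 ≤ Real.exp ((N:ℝ) * (δ/2)) / 4 := by
      calc (n:ℝ)^2 ≤ (Real.exp (N * δ / 4) / 2)^2 := by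
            apply pow_le_pow_left₀ hn0 hn2
        _ = Real.exp (N * δ / 4) ^ 2 / 4 := by ring
        _ = Real.exp ((N:ℝ) * (δ/2)) / 4 := by rw [hexp]
    calc (n:ℝ)^2 * B ≤ (Real.exp ((N:ℝ) * (δ/2)) / 4) * B := by
          apply mul_le_mul_of_nonneg_right hsq (le_of_lt (Real.exp_pos _))
      _ = Real.exp ((N:ℝ) * (δ/2) + (N:ℝ) * (δ/2)) / 4 := by
          rw [hBdef, div_mul_eq_mul_div, ← Real.exp_add]
      _ = Real.exp ((N:ℝ) * δ) / 4 := by congr 1; ring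
      _ ≤ (S.card : ℝ) / 4 := by linarith
  have hfinal : (Bad.card : ℝ) ≤ (S.card : ℝ) ^ n / 4 := by
    have hpowS : (S.card : ℝ) ^ (n-1) * (S.card : ℝ) = (S.card : ℝ) ^ n := by
      rw [← pow_succ]
      congr 1
      omega
    calc (Bad.card : ℝ) ≤ (n:ℝ)^2 * ((S.card : ℝ) ^ (n-1) * B) := hBadcard
      _ = ((n:ℝ)^2 * B) * (S.card : ℝ) ^ (n-1) := by ring
      _ ≤ ((S.card : ℝ) / 4) * (S.card : ℝ) ^ (n-1) := by
          apply mul_le_mul_of_nonneg_right hn2' (by positivity)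
      _ = (S.card : ℝ) ^ n / 4 := by rw [← hpowS]; ring
  have hpow : (0:ℝ) < (S.card : ℝ) ^ n := by positivity
  rw [hG, le_div_iff₀ hpow]
  have hGcast : (G.card : ℝ) = (S.card : ℝ) ^ n - (Bad.card : ℝ) := by
    have := hGB
    have h' : (G.card : ℝ) + (Bad.card : ℝ) = (P.card : ℝ) := by exact_mod_cast this
    rw [hPcard] at h'
    linarith
  rw [hGcast]
  linarith
end

section
/- Let F : ℝ^p → ℝ be bounded with all partial derivatives up to third order bounded by C_F. Let g be a standard Gaussian vector in ℝ^N, ξ a random vector in ℝ^N with i.i.d. coordinates of mean zero, unit variance, and finite third moment, and Σ ∈ {-1,+1}^{p×N}. Then |E[F(Σξ/N^{1/2})] - E[F(Σg/N^{1/2})]| ≤ (p·C_F/N^{1/2})·(E|ξ₁|³ + E|g₁|³). -/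
open MeasureTheory ProbabilityTheory
open Real
open scoped ENNReal NNReal

-- MVT iteration lemma
lemma mvt_pow_bound {f : ℝ → ℝ} (hf : Differentiable ℝ f) {C : ℝ} {k : ℕ}
    (hd : ∀ u, |deriv f u| ≤ C * |u| ^ k) (h0 : f 0 = 0) (t : ℝ) :
    |f t| ≤ C * |t| ^ (k + 1) := by
  have hC : 0 ≤ C * |t| ^ k := by
    rcases eq_or_ne t 0 with rfl | ht
    · rcases k with _ | k
      · simpa using (abs_nonneg _).trans (hd 0)
      · simp [pow_succ]
    · have h1 := (abs_nonneg _).trans (hd t)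
      exact h1.trans (le_of_eq rfl) |>.trans (le_refl _)
  have key := (convex_uIcc (0:ℝ) t).norm_image_sub_le_of_norm_deriv_le
    (fun x _ => (hf x)) (C := C * |t| ^ k) ?_ (Set.left_mem_uIcc) (Set.right_mem_uIcc)
  · simp only [h0, sub_zero, Real.norm_eq_abs] at key
    calc |f t| ≤ C * |t| ^ k * |t| := key
      _ = C * |t| ^ (k+1) := by ring
  · intro u hu
    have habs : |u| ≤ |t| := by
      rcases Set.mem_uIcc.mp hu with ⟨h1, h2⟩ | ⟨h1, h2⟩ <;> rw [abs_le] <;>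
        constructor <;> nlinarith [abs_nonneg t, le_abs_self t, neg_abs_le t]
    calc ‖deriv f u‖ ≤ C * |u| ^ k := hd u
      _ ≤ C * |t| ^ k := by
          rcases le_or_gt 0 C with h | h
          · exact mul_le_mul_of_nonneg_left (pow_le_pow_left₀ (abs_nonneg u) habs k) h
          · nlinarith [abs_nonneg (deriv f u), hd u, pow_le_pow_left₀ (abs_nonneg u) habs k,
              pow_nonneg (abs_nonneg u) k, pow_nonneg (abs_nonneg t) k]

lemma taylor3_bound {f : ℝ → ℝ} (hf : ContDiff ℝ 3 f) {M : ℝ}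
    (hM : ∀ u, |deriv (deriv (deriv f)) u| ≤ M) (t : ℝ) :
    |f t - f 0 - deriv f 0 * t - deriv (deriv f) 0 / 2 * t ^ 2| ≤ M * |t| ^ 3 := by
  have hdf : ContDiff ℝ 2 (deriv f) := by
    have : ContDiff ℝ (2+1) f := by norm_num; exact hf
    exact (contDiff_succ_iff_deriv.mp this).2.2
  have hddf : ContDiff ℝ 1 (deriv (deriv f)) := by
    have : ContDiff ℝ (1+1) (deriv f) := by norm_num; exact hdf
    exact (contDiff_succ_iff_deriv.mp this).2.2
  have hf1 : Differentiable ℝ f := hf.differentiable (by norm_num)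
  have hf2 : Differentiable ℝ (deriv f) := hdf.differentiable (by norm_num)
  have hf3 : Differentiable ℝ (deriv (deriv f)) := hddf.differentiable (by norm_num)
  -- step 1
  have h2 : ∀ u, |deriv (deriv f) u - deriv (deriv f) 0| ≤ M * |u| ^ 1 := by
    intro u
    have hg : Differentiable ℝ (fun u => deriv (deriv f) u - deriv (deriv f) 0) :=
      hf3.sub_const _
    have hgd : ∀ u, |deriv (fun u => deriv (deriv f) u - deriv (deriv f) 0) u| ≤ M * |u| ^ 0 := by
      intro u
      have : deriv (fun u => deriv (deriv f) u - deriv (deriv f) 0) u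
          = deriv (deriv (deriv f)) u := by
        rw [deriv_sub_const]
      rw [this, pow_zero, mul_one]; exact hM u
    simpa using mvt_pow_bound hg hgd (by simp) u
  -- step 2
  have h1 : ∀ u, |deriv f u - deriv f 0 - deriv (deriv f) 0 * u| ≤ M * |u| ^ 2 := by
    intro u
    have hg : Differentiable ℝ (fun u => deriv f u - deriv f 0 - deriv (deriv f) 0 * u) :=
      (hf2.sub_const _).sub ((differentiable_id.const_mul _))
    have hgd : ∀ u, |deriv (fun u => deriv f u - deriv f 0 - deriv (deriv f) 0 * u) u|
        ≤ M * |u| ^ 1 := by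
      intro u
      have hda : HasDerivAt (fun u => deriv f u - deriv f 0 - deriv (deriv f) 0 * u)
          (deriv (deriv f) u - deriv (deriv f) 0) u := by
        have := (((hf2 u).hasDerivAt.sub_const (deriv f 0)).sub
          ((hasDerivAt_id u).const_mul (deriv (deriv f) 0)))
        exact this.congr_deriv (by ring)
      rw [hda.deriv]; exact h2 u
    simpa using mvt_pow_bound hg hgd (by simp) u
  -- step 3
  have hg : Differentiable ℝ
      (fun u => f u - f 0 - deriv f 0 * u - deriv (deriv f) 0 / 2 * u ^ 2) :=
    ((hf1.sub_const _).sub (differentiable_id.const_mul _)).sub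
      ((differentiable_id.pow 2).const_mul _)
  have hgd : ∀ u, |deriv (fun u => f u - f 0 - deriv f 0 * u - deriv (deriv f) 0 / 2 * u ^ 2) u|
      ≤ M * |u| ^ 2 := by
    intro u
    have hda : HasDerivAt (fun u => f u - f 0 - deriv f 0 * u - deriv (deriv f) 0 / 2 * u ^ 2)
        (deriv f u - deriv f 0 - deriv (deriv f) 0 * u) u := by
      have h := ((((hf1 u).hasDerivAt.sub_const (f 0)).sub
        ((hasDerivAt_id u).const_mul (deriv f 0))).sub
        (((hasDerivAt_pow 2 u)).const_mul (deriv (deriv f) 0 / 2)))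
      convert h using 1
      rfl; rfl; rfl; ring
    rw [hda.deriv]; exact h1 u
  simpa using mvt_pow_bound hg hgd (by simp) t

lemma abs_le_one_add_abs_cube (x : ℝ) : |x| ≤ 1 + |x| ^ 3 := by
  rcases le_or_gt (|x|) 1 with h | h
  · nlinarith [abs_nonneg x, pow_nonneg (abs_nonneg x) 3]
  · nlinarith [mul_nonneg (mul_nonneg (abs_nonneg x) (sub_nonneg.mpr h.le))
      (by positivity : (0:ℝ) ≤ |x| + 1)]

lemma sq_le_one_add_abs_cube (x : ℝ) : x ^ 2 ≤ 1 + |x| ^ 3 := by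
  rcases le_or_gt (|x|) 1 with h | h
  · nlinarith [abs_nonneg x, sq_abs x]
  · nlinarith [abs_nonneg x, sq_abs x]

lemma integrable_id_of_cube (μ : Measure ℝ) [IsProbabilityMeasure μ]
    (h3 : Integrable (fun x => |x| ^ 3) μ) : Integrable (fun x : ℝ => x) μ := by
  refine (((integrable_const (1:ℝ)).add h3).mono' measurable_id.aestronglyMeasurable ?_)
  exact Filter.Eventually.of_forall fun x => by
    simpa [Real.norm_eq_abs] using abs_le_one_add_abs_cube x

lemma integrable_sq_of_cube (μ : Measure ℝ) [IsProbabilityMeasure μ]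
    (h3 : Integrable (fun x => |x| ^ 3) μ) : Integrable (fun x : ℝ => x ^ 2) μ := by
  refine (((integrable_const (1:ℝ)).add h3).mono'
    (measurable_id.pow_const 2).aestronglyMeasurable ?_)
  exact Filter.Eventually.of_forall fun x => by
    have := sq_le_one_add_abs_cube x
    rw [Real.norm_eq_abs, abs_of_nonneg (sq_nonneg x)]
    simpa using this

/-- One-dimensional comparison of integrals via third-order Taylor expansion. -/
lemma compare_integral {f : ℝ → ℝ} (hf : ContDiff ℝ 3 f) {CB M : ℝ}
    (hfb : ∀ t, |f t| ≤ CB) (hM : ∀ u, |deriv (deriv (deriv f)) u| ≤ M)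
    (μ1 μ2 : Measure ℝ) [IsProbabilityMeasure μ1] [IsProbabilityMeasure μ2]
    (hm1 : ∫ x, x ∂μ1 = 0) (hm2 : ∫ x, x ∂μ2 = 0)
    (hv1 : ∫ x, x ^ 2 ∂μ1 = 1) (hv2 : ∫ x, x ^ 2 ∂μ2 = 1)
    (h31 : Integrable (fun x => |x| ^ 3) μ1) (h32 : Integrable (fun x => |x| ^ 3) μ2) :
    |(∫ x, f x ∂μ1) - ∫ x, f x ∂μ2| ≤ M * ((∫ x, |x| ^ 3 ∂μ1) + ∫ x, |x| ^ 3 ∂μ2) := by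
  have hM0 : 0 ≤ M := (abs_nonneg _).trans (hM 0)
  set a := f 0
  set b := deriv f 0
  set c := deriv (deriv f) 0 / 2 with hc
  set R : ℝ → ℝ := fun x => f x - a - b * x - c * x ^ 2 with hR
  have hRb : ∀ x, |R x| ≤ M * |x| ^ 3 := fun x => taylor3_bound hf hM x
  have key : ∀ (μ : Measure ℝ), IsProbabilityMeasure μ → (∫ x, x ∂μ) = 0 →
      (∫ x, x ^ 2 ∂μ) = 1 → Integrable (fun x => |x| ^ 3) μ →
      (∫ x, f x ∂μ) = a + c + ∫ x, R x ∂μ := by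
    intro μ hP hm hv h3
    have intf : Integrable f μ := by
      refine (integrable_const CB).mono' (hf.continuous.aestronglyMeasurable) ?_
      exact Filter.Eventually.of_forall fun x => by simpa [Real.norm_eq_abs] using hfb x
    have intid := integrable_id_of_cube μ h3
    have intsq := integrable_sq_of_cube μ h3
    have intab : Integrable (fun x => a + b * x) μ := by
      simpa [Pi.add_def] using (integrable_const a).add (intid.const_mul b)
    have intP : Integrable (fun x => a + b * x + c * x ^ 2) μ := by
      simpa [Pi.add_def] using intab.add (intsq.const_mul c)
    have intR : Integrable R μ := by
      have : R = fun x => f x - (a + b * x + c * x ^ 2) := by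
        funext x; simp only [hR]; ring
      rw [this]
      exact intf.sub intP
    have hsplit : (∫ x, f x ∂μ) = ∫ x, (a + b * x + c * x ^ 2) + R x ∂μ := by
      congr 1; funext x; simp only [hR]; ring
    rw [hsplit, integral_add intP intR, integral_add intab (intsq.const_mul c),
      integral_add (integrable_const a) (intid.const_mul b),
      integral_const, integral_const_mul, integral_const_mul, hm, hv]
    simp [measure_univ]
  rw [key μ1 inferInstance hm1 hv1 h31, key μ2 inferInstance hm2 hv2 h32]
  have habs : ∀ (μ : Measure ℝ), Integrable (fun x => |x| ^ 3) μ → IsProbabilityMeasure μ →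
      |∫ x, R x ∂μ| ≤ M * ∫ x, |x| ^ 3 ∂μ := by
    intro μ h3 hP
    have intR : Integrable R μ := by
      refine (h3.const_mul M).mono' ?_ (Filter.Eventually.of_forall fun x => by
        simpa [Real.norm_eq_abs] using hRb x)
      exact ((hf.continuous.sub continuous_const).sub
        (continuous_const.mul continuous_id)).sub
        (continuous_const.mul (continuous_pow 2)) |>.aestronglyMeasurable
    have habs0 : |∫ x, R x ∂μ| ≤ ∫ x, |R x| ∂μ := by
      simpa [Real.norm_eq_abs] using norm_integral_le_integral_norm (μ := μ) R
    calc |∫ x, R x ∂μ| ≤ ∫ x, |R x| ∂μ := habs0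
      _ ≤ ∫ x, M * |x| ^ 3 ∂μ := integral_mono intR.abs (h3.const_mul M)
          (fun x => hRb x)
      _ = M * ∫ x, |x| ^ 3 ∂μ := integral_const_mul M _
  calc |a + c + (∫ x, R x ∂μ1) - (a + c + ∫ x, R x ∂μ2)|
      = |(∫ x, R x ∂μ1) - ∫ x, R x ∂μ2| := by congr 1; ring
    _ ≤ |∫ x, R x ∂μ1| + |∫ x, R x ∂μ2| := abs_sub _ _
    _ ≤ M * (∫ x, |x| ^ 3 ∂μ1) + M * ∫ x, |x| ^ 3 ∂μ2 :=
        add_le_add (habs μ1 h31 inferInstance) (habs μ2 h32 inferInstance)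
    _ = M * ((∫ x, |x| ^ 3 ∂μ1) + ∫ x, |x| ^ 3 ∂μ2) := by ring

variable {E F' : Type*} [NormedAddCommGroup E] [NormedSpace ℝ E]
  [NormedAddCommGroup F'] [NormedSpace ℝ F']

lemma iteratedFDeriv_comp_const_add (f : E → F') (hf : ContDiff ℝ 3 f) (b : E) :
    ∀ n : ℕ, n ≤ 3 → ∀ x : E,
      iteratedFDeriv ℝ n (fun y => f (b + y)) x = iteratedFDeriv ℝ n f (b + x) := by
  intro n
  induction n with
  | zero =>
    intro _ x
    ext m
    simp [iteratedFDeriv_zero_apply]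
  | succ n ih =>
    intro hn x
    have hn' : n ≤ 3 := le_trans (Nat.le_succ n) hn
    have hfun : iteratedFDeriv ℝ n (fun y => f (b + y))
        = fun y => iteratedFDeriv ℝ n f (b + y) := funext (ih hn')
    have hdiff : Differentiable ℝ (iteratedFDeriv ℝ n f) := by
      apply hf.differentiable_iteratedFDeriv
      exact_mod_cast Nat.lt_of_lt_of_le (Nat.lt_succ_self n) hn
    have hcomp : ∀ x : E, fderiv ℝ (fun y => iteratedFDeriv ℝ n f (b + y)) x
        = fderiv ℝ (iteratedFDeriv ℝ n f) (b + x) := by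
      intro x
      have h1 : HasFDerivAt (fun y : E => b + y) (ContinuousLinearMap.id ℝ E) x := by
        simpa using (hasFDerivAt_id x).const_add b
      have h2 := ((hdiff (b + x)).hasFDerivAt.comp x h1)
      simpa [Function.comp_def] using h2.fderiv
    ext m
    rw [iteratedFDeriv_succ_apply_left, iteratedFDeriv_succ_apply_left, hfun, hcomp]

lemma third_deriv_dir {p : ℕ} {F : (Fin p → ℝ) → ℝ} (hs : ContDiff ℝ 3 F) {CF : ℝ}
    (hd : ∀ x, ‖iteratedFDeriv ℝ 3 F x‖ ≤ CF) (c v : Fin p → ℝ) {ε : ℝ} (hv : ‖v‖ ≤ ε)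
    (t : ℝ) :
    |deriv (deriv (deriv (fun s : ℝ => F (c + s • v)))) t| ≤ CF * ε ^ 3 := by
  have hε0 : (0:ℝ) ≤ ε := le_trans (norm_nonneg v) hv
  have hCF0 : (0:ℝ) ≤ CF := le_trans (norm_nonneg _) (hd 0)
  set L : ℝ →L[ℝ] (Fin p → ℝ) := ContinuousLinearMap.smulRight (ContinuousLinearMap.id ℝ ℝ) v
    with hL
  have hLnorm : ‖L‖ ≤ ε := by
    refine (ContinuousLinearMap.opNorm_le_bound _ hε0 ?_)
    intro s
    have : L s = s • v := by simp [hL]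
    rw [this, norm_smul]
    calc ‖s‖ * ‖v‖ ≤ ‖s‖ * ε := by
          exact mul_le_mul_of_nonneg_left hv (norm_nonneg s)
      _ = ε * ‖s‖ := mul_comm _ _
  set G : (Fin p → ℝ) → ℝ := fun y => F (c + y) with hG
  have hGs : ContDiff ℝ 3 G := by
    exact hs.comp (contDiff_const.add contDiff_id)
  have hfeq : (fun s : ℝ => F (c + s • v)) = G ∘ L := by
    funext s; simp [hG, hL]
  have key : ∀ s : ℝ, ‖iteratedFDeriv ℝ 3 (G ∘ L) s‖ ≤ CF * ε ^ 3 := by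
    intro s
    rw [L.iteratedFDeriv_comp_right hGs s (by exact_mod_cast le_refl (3:ℕ))]
    calc ‖(iteratedFDeriv ℝ 3 G (L s)).compContinuousLinearMap fun _ => L‖
        ≤ ‖iteratedFDeriv ℝ 3 G (L s)‖ * ∏ _i : Fin 3, ‖L‖ :=
          ContinuousMultilinearMap.norm_compContinuousLinearMap_le _ _
      _ ≤ CF * ε ^ 3 := by
          have h1 : ‖iteratedFDeriv ℝ 3 G (L s)‖ ≤ CF := by
            have := iteratedFDeriv_comp_const_add F hs c 3 le_rfl (L s)
            rw [hG]
            rw [this]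
            exact hd _
          have h2 : (∏ _i : Fin 3, ‖L‖) ≤ ε ^ 3 := by
            simp only [Finset.prod_const, Finset.card_univ, Fintype.card_fin]
            exact pow_le_pow_left₀ (norm_nonneg L) hLnorm 3
          exact mul_le_mul h1 h2 (Finset.prod_nonneg fun _ _ => norm_nonneg L) hCF0
  have hiter : deriv (deriv (deriv (fun s : ℝ => F (c + s • v))))
      = iteratedDeriv 3 (fun s : ℝ => F (c + s • v)) := by
    simp [iteratedDeriv_succ, iteratedDeriv_zero]
  rw [hiter, hfeq]
  have := norm_iteratedFDeriv_eq_norm_iteratedDeriv (𝕜 := ℝ) (f := G ∘ L) (n := 3) (x := t)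
  rw [← Real.norm_eq_abs, ← this]
  exact key t

lemma gauss_pdf_eq : gaussianPDFReal 0 1
    = fun x => (Real.sqrt (2 * π))⁻¹ * rexp (-(1/2) * x ^ 2) := by
  funext x
  simp only [gaussianPDFReal, NNReal.coe_one, mul_one, sub_zero]
  ring_nf

lemma gauss_pdf_nonneg (x : ℝ) : 0 ≤ gaussianPDFReal 0 1 x := gaussianPDFReal_nonneg _ _ _

lemma gaussianReal_eq_withDensity : gaussianReal 0 1
    = MeasureTheory.volume.withDensity
        (fun x => ((gaussianPDFReal 0 1 x).toNNReal : ℝ≥0∞)) := by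
  rw [gaussianReal_of_var_ne_zero _ one_ne_zero]
  rfl

lemma gauss_integral_eq (g : ℝ → ℝ) :
    ∫ x, g x ∂(gaussianReal 0 1) = ∫ x, gaussianPDFReal 0 1 x * g x := by
  rw [gaussianReal_eq_withDensity,
    integral_withDensity_eq_integral_smul ((measurable_gaussianPDFReal 0 1).real_toNNReal) g]
  congr 1
  funext x
  rw [NNReal.smul_def, Real.coe_toNNReal _ (gauss_pdf_nonneg x), smul_eq_mul]

lemma gauss_integrable_iff (g : ℝ → ℝ) (hg : AEStronglyMeasurable g (gaussianReal 0 1)) :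
    Integrable g (gaussianReal 0 1)
      ↔ Integrable (fun x => g x * gaussianPDFReal 0 1 x) := by
  rw [gaussianReal_eq_withDensity]
  rw [integrable_withDensity_iff ((measurable_gaussianPDFReal 0 1).real_toNNReal.coe_nnreal_ennreal)
    (Filter.Eventually.of_forall fun x => ENNReal.coe_lt_top)]
  simp only [ENNReal.coe_toReal, Real.coe_toNNReal _ (gauss_pdf_nonneg _)]

lemma exp_half_integrable : Integrable (fun x : ℝ => rexp (-(1/2) * x ^ 2)) :=
  integrable_exp_neg_mul_sq (by norm_num)

lemma x_exp_half_integrable : Integrable (fun x : ℝ => x * rexp (-(1/2) * x ^ 2)) :=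
  integrable_mul_exp_neg_mul_sq (by norm_num)

lemma sq_exp_half_integrable : Integrable (fun x : ℝ => x ^ 2 * rexp (-(1/2) * x ^ 2)) := by
  have h := integrable_rpow_mul_exp_neg_mul_sq (b := 1/2) (by norm_num) (s := 2) (by norm_num)
  have : ∀ x : ℝ, x ^ (2:ℝ) = x ^ (2:ℕ) := fun x => by
    rw [show (2:ℝ) = ((2:ℕ):ℝ) by norm_num, Real.rpow_natCast]
  simpa [this] using h

lemma cube_exp_half_integrable : Integrable (fun x : ℝ => |x| ^ 3 * rexp (-(1/2) * x ^ 2)) := by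
  have h := (integrable_rpow_mul_exp_neg_mul_sq (b := 1/2) (by norm_num) (s := 3)
    (by norm_num)).abs
  refine h.congr (Filter.Eventually.of_forall fun x => ?_)
  show |x ^ (3:ℝ) * rexp (-(1/2) * x ^ 2)| = |x| ^ 3 * rexp (-(1/2) * x ^ 2)
  rw [show (3:ℝ) = ((3:ℕ):ℝ) by norm_num, Real.rpow_natCast, abs_mul,
    abs_of_nonneg (Real.exp_pos _).le, abs_pow]

lemma x_exp_half_integral_zero : ∫ x : ℝ, x * rexp (-(1/2) * x ^ 2) = 0 := by
  have h := integral_neg_eq_self (fun x : ℝ => x * rexp (-(1/2) * x ^ 2)) MeasureTheory.volume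
  have heq : (fun x : ℝ => (-x) * rexp (-(1/2) * (-x) ^ 2))
      = fun x : ℝ => -(x * rexp (-(1/2) * x ^ 2)) := by
    funext x; ring_nf
  rw [heq, integral_neg] at h
  linarith

lemma tendsto_phi_cocompact :
    Filter.Tendsto (fun x : ℝ => -(x * rexp (-(1/2) * x ^ 2)))
      (Filter.cocompact ℝ) (nhds 0) := by
  have h := tendsto_rpow_abs_mul_exp_neg_mul_sq_cocompact (a := 1/2) (by norm_num) 1
  rw [tendsto_zero_iff_norm_tendsto_zero]
  refine h.congr fun x => ?_
  rw [Real.rpow_one, norm_neg, Real.norm_eq_abs, abs_mul,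
    abs_of_nonneg (Real.exp_pos _).le]

lemma sq_exp_half_integral : ∫ x : ℝ, x ^ 2 * rexp (-(1/2) * x ^ 2) = Real.sqrt (2 * π) := by
  have hderiv : ∀ x : ℝ, HasDerivAt (fun x : ℝ => -(x * rexp (-(1/2) * x ^ 2)))
      (x ^ 2 * rexp (-(1/2) * x ^ 2) - rexp (-(1/2) * x ^ 2)) x := by
    intro x
    have h1 : HasDerivAt (fun x : ℝ => rexp (-(1/2) * x ^ 2))
        (rexp (-(1/2) * x ^ 2) * (-(1/2) * (2 * x))) x := by
      have := ((hasDerivAt_pow 2 x).const_mul (-(1/2) : ℝ)).exp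
      simpa using this
    have h2 := ((hasDerivAt_id x).mul h1).neg
    convert h2 using 1
    rfl; rfl; rfl; simp only [id]
    ring
  have hint : Integrable (fun x : ℝ => x ^ 2 * rexp (-(1/2) * x ^ 2) - rexp (-(1/2) * x ^ 2)) :=
    sq_exp_half_integrable.sub exp_half_integrable
  have htop : Filter.Tendsto (fun x : ℝ => -(x * rexp (-(1/2) * x ^ 2)))
      Filter.atTop (nhds 0) :=
    tendsto_phi_cocompact.mono_left
      _root_.atTop_le_cocompact
  have hbot : Filter.Tendsto (fun x : ℝ => -(x * rexp (-(1/2) * x ^ 2)))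
      Filter.atBot (nhds 0) :=
    tendsto_phi_cocompact.mono_left
      _root_.atBot_le_cocompact
  have key := integral_of_hasDerivAt_of_tendsto hderiv hint hbot htop
  rw [sub_zero] at key
  have hsplit := integral_sub sq_exp_half_integrable exp_half_integrable
  rw [hsplit] at key
  have hgauss : ∫ x : ℝ, rexp (-(1/2) * x ^ 2) = Real.sqrt (2 * π) := by
    have := integral_gaussian (1/2)
    rw [show π / (1/2) = 2 * π by ring] at this
    simpa using this
  rw [hgauss] at key
  linarith

lemma gauss_mean : ∫ x, x ∂(gaussianReal 0 1) = 0 := by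
  rw [gauss_integral_eq]
  have : (fun x : ℝ => gaussianPDFReal 0 1 x * x)
      = fun x : ℝ => (Real.sqrt (2 * π))⁻¹ * (x * rexp (-(1/2) * x ^ 2)) := by
    funext x; rw [gauss_pdf_eq]; ring
  rw [this, integral_const_mul, x_exp_half_integral_zero, mul_zero]

lemma gauss_var : ∫ x, x ^ 2 ∂(gaussianReal 0 1) = 1 := by
  rw [gauss_integral_eq]
  have : (fun x : ℝ => gaussianPDFReal 0 1 x * x ^ 2)
      = fun x : ℝ => (Real.sqrt (2 * π))⁻¹ * (x ^ 2 * rexp (-(1/2) * x ^ 2)) := by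
    funext x; rw [gauss_pdf_eq]; ring
  rw [this, integral_const_mul, sq_exp_half_integral]
  rw [inv_mul_cancel₀]
  exact (Real.sqrt_pos.mpr (by positivity)).ne'

lemma gauss_cube_integrable : Integrable (fun x => |x| ^ 3) (gaussianReal 0 1) := by
  rw [gauss_integrable_iff _ ((measurable_abs.pow_const 3).aestronglyMeasurable)]
  have : (fun x : ℝ => |x| ^ 3 * gaussianPDFReal 0 1 x)
      = fun x : ℝ => (Real.sqrt (2 * π))⁻¹ * (|x| ^ 3 * rexp (-(1/2) * x ^ 2)) := by
    funext x; rw [gauss_pdf_eq]; ring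
  rw [this]
  exact cube_exp_half_integrable.const_mul _



lemma lindeberg_key {p : ℕ} {F : (Fin p → ℝ) → ℝ} (hs : ContDiff ℝ 3 F) {CF : ℝ}
    (hFb : ∀ x, |F x| ≤ CF) (hd3 : ∀ x, ‖iteratedFDeriv ℝ 3 F x‖ ≤ CF)
    (μ1 μ2 : Measure ℝ) [IsProbabilityMeasure μ1] [IsProbabilityMeasure μ2]
    (hm1 : ∫ x, x ∂μ1 = 0) (hm2 : ∫ x, x ∂μ2 = 0)
    (hv1 : ∫ x, x ^ 2 ∂μ1 = 1) (hv2 : ∫ x, x ^ 2 ∂μ2 = 1)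
    (h31 : Integrable (fun x => |x| ^ 3) μ1) (h32 : Integrable (fun x => |x| ^ 3) μ2)
    {ε : ℝ} :
    ∀ (n : ℕ) (c : Fin p → ℝ) (w : Fin n → Fin p → ℝ), (∀ i, ‖w i‖ ≤ ε) →
      |(∫ x : Fin n → ℝ, F (c + ∑ i, x i • w i) ∂(Measure.pi fun _ => μ1))
        - ∫ x : Fin n → ℝ, F (c + ∑ i, x i • w i) ∂(Measure.pi fun _ => μ2)|
      ≤ n * (CF * ε ^ 3 * ((∫ x, |x| ^ 3 ∂μ1) + ∫ x, |x| ^ 3 ∂μ2)) := by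
  intro n
  induction n with
  | zero =>
    intro c w hw
    simp
  | succ n ih =>
    intro c w hw
    set A3 : ℝ := (∫ x, |x| ^ 3 ∂μ1) + ∫ x, |x| ^ 3 ∂μ2 with hA3
    set K : ℝ := CF * ε ^ 3 * A3 with hK
    set P1 : Measure (Fin n → ℝ) := Measure.pi fun _ => μ1 with hP1
    set P2 : Measure (Fin n → ℝ) := Measure.pi fun _ => μ2 with hP2
    set H : ℝ × (Fin n → ℝ) → ℝ :=
      fun z => F (c + z.1 • w 0 + ∑ i : Fin n, z.2 i • w (Fin.succ i)) with hH
    have Hcont : Continuous H := by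
      apply hs.continuous.comp
      refine (continuous_const.add (continuous_fst.smul continuous_const)).add ?_
      exact continuous_finset_sum _ fun i _ =>
        ((continuous_apply i).comp continuous_snd).smul continuous_const
    have Hbdd : ∀ z, |H z| ≤ CF := fun z => hFb _
    have Hint : ∀ (ρ : Measure ℝ) (σ : Measure (Fin n → ℝ)), IsProbabilityMeasure ρ →
        IsProbabilityMeasure σ → Integrable H (ρ.prod σ) := by
      intro ρ σ h1 h2
      refine (integrable_const CF).mono' Hcont.aestronglyMeasurable ?_
      exact Filter.Eventually.of_forall fun z => by
        simpa [Real.norm_eq_abs] using Hbdd z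
    -- rewrite the pi integrals as product integrals
    have hrw : ∀ (μ : Measure ℝ) (hμ : IsProbabilityMeasure μ),
        (∫ x : Fin (n+1) → ℝ, F (c + ∑ i, x i • w i) ∂(Measure.pi fun _ => μ))
          = ∫ z, H z ∂(μ.prod (Measure.pi fun _ : Fin n => μ)) := by
      intro μ hμ
      have mp := measurePreserving_piFinSuccAbove (fun _ : Fin (n+1) => μ) 0
      rw [← mp.integral_comp']
      congr 1
      funext x
      show F (c + ∑ i, x i • w i) = H (MeasurableEquiv.piFinSuccAbove (fun _ => ℝ) 0 x)
      simp only [hH, MeasurableEquiv.piFinSuccAbove_apply]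
      congr 1
      rw [Fin.sum_univ_succ, ← add_assoc]
      simp [Fin.succAbove_zero, Fin.tail]
    rw [hrw μ1 inferInstance, hrw μ2 inferInstance]
    have bound1 : |(∫ z, H z ∂(μ1.prod P1)) - ∫ z, H z ∂(μ2.prod P1)| ≤ K := by
      rw [integral_prod_symm _ (Hint μ1 P1 inferInstance inferInstance),
        integral_prod_symm _ (Hint μ2 P1 inferInstance inferInstance)]
      have intφ1 : Integrable (fun y => ∫ t, H (t, y) ∂μ1) P1 :=
        (Hint μ1 P1 inferInstance inferInstance).integral_prod_right
      have intφ2 : Integrable (fun y => ∫ t, H (t, y) ∂μ2) P1 :=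
        (Hint μ2 P1 inferInstance inferInstance).integral_prod_right
      have pointwise : ∀ y : Fin n → ℝ,
          |(∫ t, H (t, y) ∂μ1) - ∫ t, H (t, y) ∂μ2| ≤ K := by
        intro y
        have hfy : (fun t : ℝ => H (t, y))
            = fun t : ℝ => F ((c + ∑ i : Fin n, y i • w (Fin.succ i)) + t • w 0) := by
          funext t
          simp only [hH]
          rw [add_right_comm]
        rw [hfy]
        have hcd : ContDiff ℝ 3 (fun t : ℝ =>
            F ((c + ∑ i : Fin n, y i • w (Fin.succ i)) + t • w 0)) :=
          hs.comp (contDiff_const.add (contDiff_id.smul contDiff_const))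
        have := compare_integral hcd (fun t => hFb _)
          (third_deriv_dir hs hd3 (c + ∑ i : Fin n, y i • w (Fin.succ i)) (w 0) (hw 0))
          μ1 μ2 hm1 hm2 hv1 hv2 h31 h32
        simpa [hK, hA3] using this
      rw [← integral_sub intφ1 intφ2]
      calc |∫ y, ((∫ t, H (t, y) ∂μ1) - ∫ t, H (t, y) ∂μ2) ∂P1|
          ≤ ∫ y, |(∫ t, H (t, y) ∂μ1) - ∫ t, H (t, y) ∂μ2| ∂P1 := by
            simpa [Real.norm_eq_abs] using
              norm_integral_le_integral_norm (μ := P1)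
                (fun y => (∫ t, H (t, y) ∂μ1) - ∫ t, H (t, y) ∂μ2)
        _ ≤ ∫ _y, K ∂P1 := integral_mono (intφ1.sub intφ2).abs (integrable_const K)
              (fun y => pointwise y)
        _ = K := by simp [measure_univ]
    have bound2 : |(∫ z, H z ∂(μ2.prod P1)) - ∫ z, H z ∂(μ2.prod P2)| ≤ n * K := by
      rw [integral_prod _ (Hint μ2 P1 inferInstance inferInstance),
        integral_prod _ (Hint μ2 P2 inferInstance inferInstance)]
      have intψ1 : Integrable (fun t => ∫ y, H (t, y) ∂P1) μ2 :=
        (Hint μ2 P1 inferInstance inferInstance).integral_prod_left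
      have intψ2 : Integrable (fun t => ∫ y, H (t, y) ∂P2) μ2 :=
        (Hint μ2 P2 inferInstance inferInstance).integral_prod_left
      have pointwise : ∀ t : ℝ,
          |(∫ y, H (t, y) ∂P1) - ∫ y, H (t, y) ∂P2| ≤ n * K := by
        intro t
        have := ih (c + t • w 0) (fun i => w (Fin.succ i)) (fun i => hw _)
        simpa [hK, hA3, hH, hP1, hP2] using this
      rw [← integral_sub intψ1 intψ2]
      calc |∫ t, ((∫ y, H (t, y) ∂P1) - ∫ y, H (t, y) ∂P2) ∂μ2|
          ≤ ∫ t, |(∫ y, H (t, y) ∂P1) - ∫ y, H (t, y) ∂P2| ∂μ2 := by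
            simpa [Real.norm_eq_abs] using
              norm_integral_le_integral_norm (μ := μ2)
                (fun t => (∫ y, H (t, y) ∂P1) - ∫ y, H (t, y) ∂P2)
        _ ≤ ∫ _t, (n * K : ℝ) ∂μ2 := integral_mono (intψ1.sub intψ2).abs
              (integrable_const _) (fun t => pointwise t)
        _ = n * K := by simp [measure_univ]
    calc |(∫ z, H z ∂(μ1.prod P1)) - ∫ z, H z ∂(μ2.prod P2)|
        ≤ |(∫ z, H z ∂(μ1.prod P1)) - ∫ z, H z ∂(μ2.prod P1)|
          + |(∫ z, H z ∂(μ2.prod P1)) - ∫ z, H z ∂(μ2.prod P2)| := abs_sub_le _ _ _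
      _ ≤ K + n * K := add_le_add bound1 bound2
      _ = (n + 1 : ℕ) * K := by push_cast; ring

/-- Lindeberg-exchange multivariate CLT bound: for `F : ℝ^p → ℝ` bounded with derivatives
up to third order bounded by `C_F`, `ξ` a vector with i.i.d. coordinates of law `ν`
(mean zero, unit variance, finite third moment), `g` a standard Gaussian vector, and
`Σ ∈ {-1,+1}^{p×N}`,
`|E F(Σξ/√N) - E F(Σg/√N)| ≤ (p C_F/√N)(E|ξ₁|³ + E|g₁|³)`. -/
theorem lindeberg_clt_bound (p N : ℕ) (F : (Fin p → ℝ) → ℝ) (CF : ℝ)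
    (hsmooth : ContDiff ℝ 3 F)
    (hFbdd : ∀ x, |F x| ≤ CF)
    (hderiv : ∀ (k : ℕ), k ≤ 3 → ∀ x, ‖iteratedFDeriv ℝ k F x‖ ≤ CF)
    (ν : Measure ℝ) [IsProbabilityMeasure ν]
    (hmean : ∫ x, x ∂ν = 0) (hvar : ∫ x, x ^ 2 ∂ν = 1)
    (hthird : Integrable (fun x => |x| ^ 3) ν)
    (Sig : Fin p → Fin N → ℝ) (hSig : ∀ l i, Sig l i = 1 ∨ Sig l i = -1) :
    |(∫ x : Fin N → ℝ, F (fun l => (∑ i, Sig l i * x i) / Real.sqrt N)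
          ∂(Measure.pi fun _ : Fin N => ν))
      - ∫ x : Fin N → ℝ, F (fun l => (∑ i, Sig l i * x i) / Real.sqrt N)
          ∂(Measure.pi fun _ : Fin N => gaussianReal 0 1)|
      ≤ (p : ℝ) * CF / Real.sqrt N
          * ((∫ x, |x| ^ 3 ∂ν) + ∫ x, |x| ^ 3 ∂(gaussianReal 0 1)) := by
  rcases Nat.eq_zero_or_pos p with hp | hp
  · subst hp
    have hconst : ∀ x : Fin N → ℝ,
        F (fun l => (∑ i, Sig l i * x i) / Real.sqrt N) = F (fun l => l.elim0) :=
      fun x => congrArg F (funext fun l => l.elim0)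
    simp only [hconst, integral_const, measure_univ, probReal_univ, ENNReal.toReal_one, one_smul,
      Nat.cast_zero, zero_mul, zero_div, sub_self, abs_zero]
    exact le_refl 0
  rcases Nat.eq_zero_or_pos N with hN | hN
  · subst hN
    have hconst : ∀ x : Fin 0 → ℝ,
        F (fun l => (∑ i : Fin 0, Sig l i * x i) / Real.sqrt 0) = F (fun _ => 0) := by
      intro x
      congr 1
      funext l
      simp
    simp only [hconst, integral_const, measure_univ, probReal_univ, ENNReal.toReal_one, one_smul,
      Nat.cast_zero, Real.sqrt_zero, div_zero, zero_mul, sub_self, abs_zero]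
    exact le_refl 0
  · have hN0 : (0:ℝ) < (N:ℝ) := by exact_mod_cast hN
    have hsN : (0:ℝ) < Real.sqrt N := Real.sqrt_pos.mpr hN0
    have hCF : (0:ℝ) ≤ CF := (abs_nonneg _).trans (hFbdd 0)
    set w : Fin N → Fin p → ℝ := fun i l => Sig l i / Real.sqrt N with hw_def
    have hw : ∀ i, ‖w i‖ ≤ (Real.sqrt N)⁻¹ := by
      intro i
      rw [pi_norm_le_iff_of_nonneg (inv_nonneg.mpr hsN.le)]
      intro l
      rw [Real.norm_eq_abs]
      show |Sig l i / Real.sqrt N| ≤ (Real.sqrt N)⁻¹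
      rcases hSig l i with h | h <;> rw [h, abs_div, abs_of_nonneg hsN.le] <;> simp
    have hint : ∀ x : Fin N → ℝ,
        F (fun l => (∑ i, Sig l i * x i) / Real.sqrt N)
          = F ((0 : Fin p → ℝ) + ∑ i, x i • w i) := by
      intro x
      congr 1
      funext l
      simp only [Pi.add_apply, Pi.zero_apply, zero_add, Finset.sum_apply, Pi.smul_apply,
        smul_eq_mul, hw_def, Finset.sum_div]
      apply Finset.sum_congr rfl
      intro i _
      ring
    have key := lindeberg_key hsmooth hFbdd (hderiv 3 le_rfl) ν (gaussianReal 0 1)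
      hmean gauss_mean hvar gauss_var hthird gauss_cube_integrable N 0 w hw
    simp only [hint]
    refine key.trans ?_
    set A3 : ℝ := (∫ x, |x| ^ 3 ∂ν) + ∫ x, |x| ^ 3 ∂(gaussianReal 0 1) with hA3
    have hA3nn : 0 ≤ A3 := by
      apply add_nonneg <;>
        exact integral_nonneg fun x => by positivity
    have hmul : Real.sqrt N * Real.sqrt N = (N:ℝ) := Real.mul_self_sqrt hN0.le
    have heq : (N:ℝ) * (CF * ((Real.sqrt N)⁻¹) ^ 3 * A3) = CF / Real.sqrt N * A3 := by
      have h1 : ((Real.sqrt N)⁻¹) ^ 3 = (N:ℝ)⁻¹ * (Real.sqrt N)⁻¹ := by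
        rw [pow_succ, pow_two, ← mul_inv, hmul]
      rw [h1, div_eq_mul_inv]
      have h2 : (N:ℝ) * (CF * ((N:ℝ)⁻¹ * (Real.sqrt N)⁻¹) * A3)
          = ((N:ℝ) * (N:ℝ)⁻¹) * (CF * (Real.sqrt N)⁻¹ * A3) := by ring
      rw [h2, mul_inv_cancel₀ hN0.ne', one_mul]
    rw [heq]
    apply mul_le_mul_of_nonneg_right ?_ hA3nn
    rw [div_le_div_iff_of_pos_right hsN]
    exact le_mul_of_one_le_left hCF (by exact_mod_cast hp)
end
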